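/- For all k ≥ 2 and all n ≥ 0, the number of permutations of [n] avoiding the patterns 123, 132, and k−1 k−2 … 2 1 k equals the (k−1)-generalized Fibonacci number F_{k-1,n+1}. -/

import Mathlib

/-- A permutation `π` of `Fin n` avoids the pattern given (in one-line notation) by the
list `s` when there is no increasing choice of positions along which the values of `π`
have the same pairwise comparisons as the entries of `s`. -/
def AvoidsPat {n : ℕ} (π : Equiv.Perm (Fin n)) (s : List ℕ) : Prop :=
  ¬ ∃ f : Fin s.length ↪o Fin n,
      ∀ i j : Fin s.length, s.get i < s.get j ↔ π (f i) < π (f j)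

/-- The number of permutations of `Fin n` avoiding every pattern in `R`. -/
noncomputable def AvoidCount (R : List (List ℕ)) (n : ℕ) : ℕ :=
  Nat.card {π : Equiv.Perm (Fin n) // ∀ s ∈ R, AvoidsPat π s}

/-- The `k`-generalized Fibonacci numbers: `F_{k,n} = 0` for `n ≤ 0`, `F_{k,1} = 1`,
`F_{k,n} = ∑_{i=1}^{k} F_{k,n-i}` for `n ≥ 2` (terms with nonpositive index are `0`). -/
def genFib (k : ℕ) : ℕ → ℕ
  | 0 => 0
  | 1 => 1
  | n + 2 => ∑ i ∈ Finset.range k, genFib k (n + 1 - i)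

open Finset Equiv Function

/-- combined avoidance of 123 and 132 -/
def P1 {n : ℕ} (π : Equiv.Perm (Fin n)) : Prop :=
  ∀ i j l : Fin n, i < j → j < l → π i < π j → π i < π l → False

/-- avoidance of the pattern m (m-1) ... 1 (m+1) -/
def P2 (m : ℕ) {n : ℕ} (π : Equiv.Perm (Fin n)) : Prop :=
  ¬ ∃ g : Fin (m + 1) → Fin n, StrictMono g ∧
      (∀ i j : Fin (m + 1), i < j → (j : ℕ) < m → π (g j) < π (g i)) ∧
      (∀ i : Fin (m + 1), (i : ℕ) < m → π (g i) < π (g (Fin.last m)))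

def Good (m : ℕ) {n : ℕ} (π : Equiv.Perm (Fin n)) : Prop := P1 π ∧ P2 m π

/-- position of the maximum value -/
def rpos {n : ℕ} (π : Equiv.Perm (Fin (n + 1))) : ℕ :=
  (π.symm ⟨n, n.lt_succ_self⟩ : ℕ)

lemma rpos_lt {n : ℕ} (π : Equiv.Perm (Fin (n + 1))) : rpos π < n + 1 :=
  (π.symm _).isLt

lemma pi_rpos {n : ℕ} (π : Equiv.Perm (Fin (n + 1))) :
    π ⟨rpos π, rpos_lt π⟩ = ⟨n, n.lt_succ_self⟩ := by
  have : (⟨rpos π, rpos_lt π⟩ : Fin (n + 1)) = π.symm ⟨n, n.lt_succ_self⟩ := rfl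
  rw [this, Equiv.apply_symm_apply]


/-- the value (as a natural number) of the assembled permutation at position `i` -/
def assembleVal (n r : ℕ) (τ : Equiv.Perm (Fin (n - r))) (i : ℕ) : ℕ :=
  if i < r then n - 1 - i
  else if i = r then n
  else if h : i - r - 1 < n - r then (τ ⟨i - r - 1, h⟩ : ℕ) else 0

lemma assembleVal_lt (n r : ℕ) (τ : Equiv.Perm (Fin (n - r))) (i : ℕ) :
    assembleVal n r τ i < n + 1 := by
  unfold assembleVal
  split_ifs with h1 h2 h3
  · omega
  · omega
  · have := (τ ⟨i - r - 1, h3⟩).isLt; omega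
  · omega

def assembleFun (n r : ℕ) (τ : Equiv.Perm (Fin (n - r))) (i : Fin (n + 1)) : Fin (n + 1) :=
  ⟨assembleVal n r τ i, assembleVal_lt n r τ i⟩

lemma assembleVal_prefix (n r : ℕ) (τ : Equiv.Perm (Fin (n - r))) {i : ℕ} (h : i < r) :
    assembleVal n r τ i = n - 1 - i := by
  unfold assembleVal; rw [if_pos h]

lemma assembleVal_root (n r : ℕ) (τ : Equiv.Perm (Fin (n - r))) :
    assembleVal n r τ r = n := by
  unfold assembleVal; rw [if_neg (by omega), if_pos rfl]

lemma assembleVal_suffix (n r : ℕ) (τ : Equiv.Perm (Fin (n - r))) {i : ℕ} (h1 : r < i)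
    (h2 : i < n + 1) : ∃ h : i - r - 1 < n - r, assembleVal n r τ i = (τ ⟨i - r - 1, h⟩ : ℕ) := by
  have h : i - r - 1 < n - r := by omega
  refine ⟨h, ?_⟩
  unfold assembleVal
  rw [if_neg (by omega), if_neg (by omega), dif_pos h]

lemma assembleVal_suffix_lt (n r : ℕ) (τ : Equiv.Perm (Fin (n - r))) {i : ℕ} (h1 : r < i)
    (h2 : i < n + 1) : assembleVal n r τ i < n - r := by
  obtain ⟨h, hv⟩ := assembleVal_suffix n r τ h1 h2
  rw [hv]; exact (τ ⟨i - r - 1, h⟩).isLt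

lemma assembleFun_inj (n r : ℕ) (hr : r ≤ n) (τ : Equiv.Perm (Fin (n - r))) :
    Function.Injective (assembleFun n r τ) := by
  intro a b hab
  have ha := a.isLt; have hb := b.isLt
  simp only [assembleFun, Fin.mk.injEq] at hab
  rcases lt_trichotomy (a : ℕ) r with h1 | h1 | h1 <;>
    rcases lt_trichotomy (b : ℕ) r with h2 | h2 | h2
  · rw [assembleVal_prefix n r τ h1, assembleVal_prefix n r τ h2] at hab
    exact Fin.ext (by omega)
  · rw [assembleVal_prefix n r τ h1, h2, assembleVal_root] at hab; omega
  · rw [assembleVal_prefix n r τ h1] at hab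
    have := assembleVal_suffix_lt n r τ h2 hb
    omega
  · rw [h1, assembleVal_root] at hab
    rw [assembleVal_prefix n r τ h2] at hab; omega
  · exact Fin.ext (by omega)
  · rw [h1, assembleVal_root] at hab
    have := assembleVal_suffix_lt n r τ h2 hb; omega
  · have := assembleVal_suffix_lt n r τ h1 ha
    rw [assembleVal_prefix n r τ h2] at hab
    omega
  · have := assembleVal_suffix_lt n r τ h1 ha
    rw [h2, assembleVal_root] at hab; omega
  · obtain ⟨p1, v1⟩ := assembleVal_suffix n r τ h1 ha
    obtain ⟨p2, v2⟩ := assembleVal_suffix n r τ h2 hb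
    rw [v1, v2] at hab
    have := τ.injective (Fin.ext hab)
    simp only [Fin.mk.injEq] at this
    exact Fin.ext (by omega)

noncomputable def assemble (n r : ℕ) (hr : r ≤ n) (τ : Equiv.Perm (Fin (n - r))) :
    Equiv.Perm (Fin (n + 1)) :=
  Equiv.ofBijective _ ((Finite.injective_iff_bijective).mp (assembleFun_inj n r hr τ))

lemma assemble_apply (n r : ℕ) (hr : r ≤ n) (τ : Equiv.Perm (Fin (n - r))) (i : Fin (n + 1)) :
    assemble n r hr τ i = assembleFun n r τ i := rfl

def embedSuffix (n r : ℕ) (j : Fin (n - r)) : Fin (n + 1) :=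
  ⟨r + 1 + j, by have := j.isLt; omega⟩

def extractFun (n r : ℕ) (π : Equiv.Perm (Fin (n + 1))) (j : Fin (n - r)) : Fin (n - r) :=
  ⟨(π (embedSuffix n r j) : ℕ) % (n - r), Nat.mod_lt _ j.pos⟩

noncomputable def extract (n r : ℕ) (π : Equiv.Perm (Fin (n + 1))) :
    Equiv.Perm (Fin (n - r)) :=
  if h : Function.Bijective (extractFun n r π) then Equiv.ofBijective _ h else 1

section Structure

variable {n : ℕ} (π : Equiv.Perm (Fin (n + 1)))

/-- if `π a` is small enough, there are two larger values at later positions -/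
lemma count_lemma (h1 : P1 π) (a : Fin (n + 1)) (ha : (π a : ℕ) + (a : ℕ) + 2 ≤ n) : False := by
  classical
  set B : Finset (Fin (n + 1)) := univ.filter (fun p => π a < π p) with hB
  have hBcard : B.card = n - (π a : ℕ) := by
    have himg : B = (univ.filter (fun v => π a < v)).image π.symm := by
      ext p
      simp only [hB, mem_filter, mem_univ, true_and, mem_image]
      constructor
      · intro h; exact ⟨π p, h, π.symm_apply_apply p⟩
      · rintro ⟨v, hv, rfl⟩; rwa [Equiv.apply_symm_apply]
    rw [himg, Finset.card_image_of_injective _ π.symm.injective]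
    have heq : univ.filter (fun v => π a < v) = Finset.Ioi (π a) := by
      ext v; simp [Finset.mem_Ioi]
    rw [heq, Fin.card_Ioi]
    omega
  have hsub : B ⊆ (B.filter (fun p => a < p)) ∪ Finset.Iio a := by
    intro p hp
    have hp' := hp
    simp only [hB, mem_filter, mem_univ, true_and] at hp'
    rcases lt_trichotomy a p with h | h | h
    · exact Finset.mem_union_left _ (Finset.mem_filter.mpr ⟨hp, h⟩)
    · exact absurd hp' (by rw [h]; exact lt_irrefl _)
    · exact Finset.mem_union_right _ (Finset.mem_Iio.mpr h)
  have hle := (Finset.card_le_card hsub).trans (Finset.card_union_le _ _)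
  rw [Fin.card_Iio] at hle
  have hbig : 1 < (B.filter (fun p => a < p)).card := by omega
  obtain ⟨p, hp, q, hq, hpq⟩ := Finset.one_lt_card.mp hbig
  simp only [hB, mem_filter, mem_univ, true_and] at hp hq
  rcases lt_or_gt_of_ne hpq with h | h
  · exact h1 a p q hp.2 h hp.1 hq.1
  · exact h1 a q p hq.2 h hq.1 hp.1

/-- π is strictly decreasing before the position of the maximum -/
lemma dec_before (h1 : P1 π) (a b : Fin (n + 1)) (hab : a < b) (hb : (b : ℕ) < rpos π) :
    π b < π a := by
  rcases lt_trichotomy (π a) (π b) with h | h | h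
  · exfalso
    have hrp : b < (⟨rpos π, rpos_lt π⟩ : Fin (n + 1)) := hb
    have hne : (π a : ℕ) ≠ n := by
      intro hcontra
      have he : π a = π ⟨rpos π, rpos_lt π⟩ := by
        rw [pi_rpos]; exact Fin.ext hcontra
      have hval := congrArg Fin.val (π.injective he)
      simp only at hval
      have hblt : (b : ℕ) < rpos π := hb
      have : (a : ℕ) < (b : ℕ) := hab
      omega
    have hv : π a < π ⟨rpos π, rpos_lt π⟩ := by
      rw [pi_rpos]
      have hlt := (π a).isLt
      have hgoal : (π a : ℕ) < n := by omega
      exact hgoal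
    exact h1 a b _ hab hrp h hv
  · exact absurd (π.injective h) (Fin.ne_of_lt hab)
  · exact h

/-- values before the max position form the staircase n-1, n-2, ... -/
lemma staircase (h1 : P1 π) : ∀ a : ℕ, ∀ ha : a < rpos π,
    (π ⟨a, lt_trans ha (rpos_lt π)⟩ : ℕ) = n - 1 - a := by
  intro a
  induction a with
  | zero =>
    intro ha
    have hne : (π ⟨0, lt_trans ha (rpos_lt π)⟩ : ℕ) ≠ n := by
      intro hcontra
      have he : π ⟨0, lt_trans ha (rpos_lt π)⟩ = π ⟨rpos π, rpos_lt π⟩ := by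
        rw [pi_rpos]; exact Fin.ext hcontra
      have hval := congrArg Fin.val (π.injective he)
      simp only at hval
      omega
    have hlb : ¬ ((π ⟨0, lt_trans ha (rpos_lt π)⟩ : ℕ) + 0 + 2 ≤ n) := by
      intro h
      exact count_lemma π h1 ⟨0, lt_trans ha (rpos_lt π)⟩ (by simpa using h)
    have := (π ⟨0, lt_trans ha (rpos_lt π)⟩).isLt
    omega
  | succ a ih =>
    intro ha
    have ha' : a < rpos π := by omega
    have hdec : π ⟨a + 1, lt_trans ha (rpos_lt π)⟩ < π ⟨a, lt_trans ha' (rpos_lt π)⟩ :=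
      dec_before π h1 _ _ (by simp [Fin.lt_def]) ha
    have hub := ih ha'
    have hlb : ¬ ((π ⟨a + 1, lt_trans ha (rpos_lt π)⟩ : ℕ) + (a + 1) + 2 ≤ n) := by
      intro h
      exact count_lemma π h1 ⟨a + 1, lt_trans ha (rpos_lt π)⟩ (by simpa using h)
    have hd : (π ⟨a + 1, lt_trans ha (rpos_lt π)⟩ : ℕ) < n - 1 - a := by
      rw [← hub]; exact hdec
    omega

/-- the max position is below m for good permutations -/
lemma rpos_lt_m {m : ℕ} (h : Good m π) : rpos π < m := by
  by_contra hcon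
  push_neg at hcon
  apply h.2
  refine ⟨fun i => if h : (i : ℕ) < m then ⟨i, by have := rpos_lt π; omega⟩
    else ⟨rpos π, rpos_lt π⟩, ?_, ?_, ?_⟩
  · intro i j hij
    simp only [Fin.lt_def]
    split_ifs with hi hj hj
    · exact hij
    · simp only [Fin.lt_def] at hij ⊢; omega
    · exfalso; have := j.isLt; simp only [Fin.lt_def] at hij; omega
    · exfalso; have hi' := i.isLt; have hj' := j.isLt
      simp only [Fin.lt_def] at hij; omega
  · intro i j hij hj
    have hi : (i : ℕ) < m := lt_trans hij hj
    simp only [dif_pos hi, dif_pos hj]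
    have vi := staircase π h.1 i (by omega)
    have vj := staircase π h.1 j (by omega)
    rw [Fin.lt_def, vi, vj]
    have := rpos_lt π
    simp only [Fin.lt_def] at hij
    omega
  · intro i hi
    have hlast : ¬ ((Fin.last m : ℕ) < m) := by simp
    simp only [dif_pos hi, dif_neg hlast]
    have vi := staircase π h.1 i (by omega)
    rw [pi_rpos, Fin.lt_def, vi]
    have hrl := rpos_lt π
    show n - 1 - (i : ℕ) < n
    omega

/-- values after the max position are small -/
lemma suffix_small (h1 : P1 π) (j : Fin (n + 1)) (hj : rpos π < (j : ℕ)) :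
    (π j : ℕ) < n - rpos π := by
  have hne : (π j : ℕ) ≠ n := by
    intro hcontra
    have he : π j = π ⟨rpos π, rpos_lt π⟩ := by
      rw [pi_rpos]; exact Fin.ext hcontra
    have hval := congrArg Fin.val (π.injective he)
    simp only at hval
    omega
  by_contra hcon
  push_neg at hcon
  have hjlt := (π j).isLt
  have hi : n - 1 - (π j : ℕ) < rpos π := by omega
  have hst := staircase π h1 (n - 1 - (π j : ℕ)) hi
  have he : π ⟨n - 1 - (π j : ℕ), lt_trans hi (rpos_lt π)⟩ = π j :=
    Fin.ext (by omega)
  have hval := congrArg Fin.val (π.injective he)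
  simp only at hval
  omega

end Structure

section Transfer

variable {n : ℕ} (π : Equiv.Perm (Fin (n + 1)))

lemma embedSuffix_gt {r : ℕ} (j : Fin (n - r)) : r < (embedSuffix n r j : ℕ) := by
  unfold embedSuffix; simp only; omega

lemma extractFun_val (h1 : P1 π) (hr : rpos π ≤ r') (hr2 : r' = rpos π) : True := trivial

lemma extractFun_val' (h1 : P1 π) (j : Fin (n - rpos π)) :
    (extractFun n (rpos π) π j : ℕ) = (π (embedSuffix n (rpos π) j) : ℕ) := by
  unfold extractFun; simp only
  exact Nat.mod_eq_of_lt (suffix_small π h1 _ (embedSuffix_gt j))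

lemma extract_bij (h1 : P1 π) : Function.Bijective (extractFun n (rpos π) π) := by
  rw [← Finite.injective_iff_bijective]
  intro a b hab
  have hval := congrArg Fin.val hab
  rw [extractFun_val' π h1, extractFun_val' π h1] at hval
  have := π.injective (Fin.ext hval)
  unfold embedSuffix at this
  have := congrArg Fin.val this
  simp only at this
  exact Fin.ext (by omega)

lemma extract_apply (h1 : P1 π) (j : Fin (n - rpos π)) :
    ((extract n (rpos π) π) j : ℕ) = (π (embedSuffix n (rpos π) j) : ℕ) := by
  unfold extract
  rw [dif_pos (extract_bij π h1)]
  exact extractFun_val' π h1 j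

lemma good_extract {m : ℕ} (h : Good m π) : Good m (extract n (rpos π) π) := by
  constructor
  · intro i j l hij hjl h1 h2
    rw [Fin.lt_def, extract_apply π h.1, extract_apply π h.1] at h1 h2
    refine h.1 (embedSuffix n (rpos π) i) (embedSuffix n (rpos π) j)
      (embedSuffix n (rpos π) l) ?_ ?_ (Fin.lt_def.mpr h1) (Fin.lt_def.mpr h2)
    · rw [Fin.lt_def] at hij ⊢; unfold embedSuffix; simp only; omega
    · rw [Fin.lt_def] at hjl ⊢; unfold embedSuffix; simp only; omega
  · rintro ⟨g, mono, c2, c3⟩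
    apply h.2
    refine ⟨fun i => embedSuffix n (rpos π) (g i), ?_, ?_, ?_⟩
    · intro i j hij
      have := mono hij
      rw [Fin.lt_def] at this ⊢; unfold embedSuffix; simp only; omega
    · intro i j hij hj
      have := c2 i j hij hj
      rw [Fin.lt_def, extract_apply π h.1, extract_apply π h.1] at this
      exact Fin.lt_def.mpr this
    · intro i hi
      have := c3 i hi
      rw [Fin.lt_def, extract_apply π h.1, extract_apply π h.1] at this
      exact Fin.lt_def.mpr this

end Transfer

section AssembleGood

lemma good_assemble {m n r : ℕ} (hm : 1 ≤ m) (hr : r < m) (hrn : r ≤ n)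
    (τ : Equiv.Perm (Fin (n - r))) (hτ : Good m τ) : Good m (assemble n r hrn τ) := by
  have hval : ∀ x : Fin (n + 1), ((assemble n r hrn τ) x : ℕ) = assembleVal n r τ (x : ℕ) :=
    fun _ => rfl
  constructor
  · intro a b c hab hbc h1 h2
    rw [Fin.lt_def, hval, hval] at h1 h2
    rw [Fin.lt_def] at hab hbc
    have hc := c.isLt; have hb := b.isLt; have ha := a.isLt
    rcases lt_trichotomy (a : ℕ) r with hA | hA | hA
    · rw [assembleVal_prefix n r τ hA] at h1 h2
      rcases lt_trichotomy (b : ℕ) r with hB | hB | hB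
      · rw [assembleVal_prefix n r τ hB] at h1; omega
      · have hC : r < (c : ℕ) := by omega
        have := assembleVal_suffix_lt n r τ hC hc
        omega
      · have := assembleVal_suffix_lt n r τ hB hb
        omega
    · rw [hA, assembleVal_root] at h1
      have := assembleVal_lt n r τ (b : ℕ)
      omega
    · have hB : r < (b : ℕ) := by omega
      have hC : r < (c : ℕ) := by omega
      obtain ⟨pa, va⟩ := assembleVal_suffix n r τ hA ha
      obtain ⟨pb, vb⟩ := assembleVal_suffix n r τ hB hb
      obtain ⟨pc, vc⟩ := assembleVal_suffix n r τ hC hc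
      rw [va, vb] at h1
      rw [va, vc] at h2
      exact hτ.1 ⟨(a : ℕ) - r - 1, pa⟩ ⟨(b : ℕ) - r - 1, pb⟩ ⟨(c : ℕ) - r - 1, pc⟩
        (Fin.lt_def.mpr (by simp only; omega)) (Fin.lt_def.mpr (by simp only; omega))
        (Fin.lt_def.mpr h1) (Fin.lt_def.mpr h2)
  · rintro ⟨g, mono, c2, c3⟩
    have h0L : (0 : Fin (m + 1)) < Fin.last m := by
      rw [Fin.lt_def]; simp only [Fin.val_zero, Fin.val_last]; omega
    have h0m : ((0 : Fin (m + 1)) : ℕ) < m := by simp only [Fin.val_zero]; omega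
    rcases lt_trichotomy ((g 0 : Fin (n + 1)) : ℕ) r with hA | hA | hA
    · -- g 0 in the prefix: g last must be at position r, forcing r ≥ m
      have hgL : ((g (Fin.last m)) : ℕ) = r := by
        rcases lt_trichotomy ((g (Fin.last m)) : ℕ) r with hB | hB | hB
        · exfalso
          have hc3 := c3 0 h0m
          rw [Fin.lt_def, hval, hval, assembleVal_prefix n r τ hA,
            assembleVal_prefix n r τ hB] at hc3
          have hmono := mono h0L
          rw [Fin.lt_def] at hmono
          omega
        · exact hB
        · exfalso
          have hc3 := c3 0 h0m
          rw [Fin.lt_def, hval, hval, assembleVal_prefix n r τ hA] at hc3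
          have := assembleVal_suffix_lt n r τ hB (g (Fin.last m)).isLt
          omega
      have hle : ∀ i : Fin (m + 1), (i : ℕ) ≤ ((g i) : ℕ) := by
        intro i
        induction i using Fin.induction with
        | zero => exact Nat.zero_le _
        | succ i ih =>
          have hlt := mono (Fin.castSucc_lt_succ : Fin.castSucc i < i.succ)
          rw [Fin.lt_def] at hlt
          simp only [Fin.coe_castSucc] at ih
          simp only [Fin.val_succ]
          omega
      have hiL : (⟨m - 1, by omega⟩ : Fin (m + 1)) < Fin.last m := by
        rw [Fin.lt_def]; simp only [Fin.val_last]; omega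
      have hlt := mono hiL
      rw [Fin.lt_def, hgL] at hlt
      have := hle ⟨m - 1, by omega⟩
      simp only at this
      omega
    · have hc3 := c3 0 h0m
      rw [Fin.lt_def, hval, hval, hA, assembleVal_root] at hc3
      have := assembleVal_lt n r τ ((g (Fin.last m)) : ℕ)
      omega
    · -- everything in the suffix: project down to τ
      have hgt : ∀ i, r < ((g i) : ℕ) := by
        intro i
        have hle := mono.monotone (Fin.zero_le i)
        rw [Fin.le_def] at hle
        omega
      apply hτ.2
      refine ⟨fun i => ⟨((g i) : ℕ) - r - 1, by have := (g i).isLt; have := hgt i; omega⟩,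
        ?_, ?_, ?_⟩
      · intro i j hij
        have := mono hij
        rw [Fin.lt_def] at this ⊢
        simp only
        have := hgt i
        omega
      · intro i j hij hj
        have hc2 := c2 i j hij hj
        rw [Fin.lt_def, hval, hval] at hc2
        obtain ⟨pi, vi⟩ := assembleVal_suffix n r τ (hgt i) (g i).isLt
        obtain ⟨pj, vj⟩ := assembleVal_suffix n r τ (hgt j) (g j).isLt
        rw [vi, vj] at hc2
        exact Fin.lt_def.mpr hc2
      · intro i hi
        have hc3 := c3 i hi
        rw [Fin.lt_def, hval, hval] at hc3
        obtain ⟨pi, vi⟩ := assembleVal_suffix n r τ (hgt i) (g i).isLt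
        obtain ⟨pL, vL⟩ := assembleVal_suffix n r τ (hgt (Fin.last m)) (g (Fin.last m)).isLt
        rw [vi, vL] at hc3
        exact Fin.lt_def.mpr hc3

end AssembleGood

section Inversion

lemma rpos_assemble {n r : ℕ} (hrn : r ≤ n) (τ : Equiv.Perm (Fin (n - r))) :
    rpos (assemble n r hrn τ) = r := by
  have hv : (assemble n r hrn τ) ⟨r, by omega⟩ = ⟨n, n.lt_succ_self⟩ := by
    apply Fin.ext
    show assembleVal n r τ r = n
    exact assembleVal_root n r τ
  unfold rpos
  have he := (Equiv.symm_apply_eq (assemble n r hrn τ)).mpr hv.symm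
  rw [he]

lemma assemble_extract {m n : ℕ} (π : Equiv.Perm (Fin (n + 1))) (h : Good m π)
    (hrn : rpos π ≤ n) :
    assemble n (rpos π) hrn (extract n (rpos π) π) = π := by
  apply Equiv.ext
  intro i
  apply Fin.ext
  show assembleVal n (rpos π) (extract n (rpos π) π) (i : ℕ) = (π i : ℕ)
  have hi := i.isLt
  rcases lt_trichotomy (i : ℕ) (rpos π) with hA | hA | hA
  · rw [assembleVal_prefix _ _ _ hA]
    have hst := staircase π h.1 (i : ℕ) hA
    have he : (⟨(i : ℕ), lt_trans hA (rpos_lt π)⟩ : Fin (n + 1)) = i := Fin.ext rfl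
    rw [he] at hst
    omega
  · rw [hA, assembleVal_root]
    have he : (⟨rpos π, rpos_lt π⟩ : Fin (n + 1)) = i := Fin.ext hA.symm
    rw [← he, pi_rpos]
  · obtain ⟨p, hv⟩ := assembleVal_suffix n (rpos π) (extract n (rpos π) π) hA hi
    rw [hv, extract_apply π h.1]
    congr 1
    apply congrArg
    apply Fin.ext
    show rpos π + 1 + ((i : ℕ) - rpos π - 1) = (i : ℕ)
    omega

lemma extract_assemble {n r : ℕ} (hrn : r ≤ n) (τ : Equiv.Perm (Fin (n - r))) :
    extract n r (assemble n r hrn τ) = τ := by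
  have hfun : extractFun n r (assemble n r hrn τ) = ⇑τ := by
    funext j
    apply Fin.ext
    show ((assemble n r hrn τ) (embedSuffix n r j) : ℕ) % (n - r) = (τ j : ℕ)
    have hval : ((assemble n r hrn τ) (embedSuffix n r j) : ℕ)
        = assembleVal n r τ ((embedSuffix n r j) : ℕ) := rfl
    rw [hval]
    obtain ⟨p, hv⟩ := assembleVal_suffix n r τ (embedSuffix_gt j) (embedSuffix n r j).isLt
    rw [hv]
    have hje : (⟨((embedSuffix n r j) : ℕ) - r - 1, p⟩ : Fin (n - r)) = j := by
      apply Fin.ext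
      show ((embedSuffix n r j) : ℕ) - r - 1 = (j : ℕ)
      show (r + 1 + (j : ℕ)) - r - 1 = (j : ℕ)
      omega
    rw [hje]
    exact Nat.mod_eq_of_lt (τ j).isLt
  have hbij : Function.Bijective (extractFun n r (assemble n r hrn τ)) := by
    rw [hfun]; exact τ.bijective
  unfold extract
  rw [dif_pos hbij]
  apply Equiv.ext
  intro j
  show extractFun n r (assemble n r hrn τ) j = τ j
  rw [hfun]

end Inversion

section Counting

noncomputable def A (m N : ℕ) : ℕ := Nat.card {π : Equiv.Perm (Fin N) // Good m π}

open Classical in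
lemma A_eq_filter (m N : ℕ) :
    A m N = ((univ : Finset (Equiv.Perm (Fin N))).filter (fun π => Good m π)).card := by
  rw [A, Nat.card_eq_fintype_card, Fintype.card_subtype]

lemma A_zero (m : ℕ) : A m 0 = 1 := by
  have hall : ∀ π : Equiv.Perm (Fin 0), Good m π := by
    intro π
    constructor
    · intro i; exact i.elim0
    · rintro ⟨g, -, -, -⟩; exact (g 0).elim0
  rw [A, Nat.card_congr (Equiv.subtypeUnivEquiv hall), Nat.card_eq_fintype_card]
  simp

open Classical in
lemma card_fiber (m n r : ℕ) (hm : 1 ≤ m) (hr : r < m) (hrn : r ≤ n) :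
    ((univ : Finset (Equiv.Perm (Fin (n + 1)))).filter
        (fun π => Good m π ∧ rpos π = r)).card = A m (n - r) := by
  rw [A_eq_filter]
  refine Finset.card_nbij' (fun π => extract n r π) (fun τ => assemble n r hrn τ)
    ?_ ?_ ?_ ?_
  · intro π hπ
    rw [Finset.mem_coe, mem_filter] at hπ
    obtain ⟨-, hg, hrp⟩ := hπ
    rw [Finset.mem_coe, mem_filter]
    subst hrp
    exact ⟨mem_univ _, good_extract π hg⟩
  · intro τ hτ
    rw [Finset.mem_coe, mem_filter] at hτ
    rw [Finset.mem_coe, mem_filter]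
    exact ⟨mem_univ _, good_assemble hm hr hrn τ hτ.2, rpos_assemble hrn τ⟩
  · intro π hπ
    rw [Finset.mem_coe, mem_filter] at hπ
    obtain ⟨-, hg, hrp⟩ := hπ
    subst hrp
    exact assemble_extract π hg hrn
  · intro τ hτ
    exact extract_assemble hrn τ

open Classical in
lemma A_succ (m n : ℕ) (hm : 1 ≤ m) :
    A m (n + 1) = ∑ r ∈ Finset.range (min m (n + 1)), A m (n - r) := by
  rw [A_eq_filter]
  rw [Finset.card_eq_sum_card_fiberwise (f := fun π => rpos π)
    (t := Finset.range (min m (n + 1)))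
    (fun π hπ => by
      rw [Finset.mem_coe, mem_filter] at hπ
      rw [Finset.mem_coe, Finset.mem_range]
      show rpos π < min m (n + 1)
      have h1 := rpos_lt_m π hπ.2
      have h2 := rpos_lt π
      omega)]
  refine Finset.sum_congr rfl ?_
  intro r hr
  rw [Finset.mem_range] at hr
  rw [Finset.filter_filter]
  exact card_fiber m n r hm (by omega) (by omega)

lemma A_eq_genFib (m : ℕ) (hm : 1 ≤ m) : ∀ N, A m N = genFib m (N + 1) := by
  intro N
  induction N using Nat.strong_induction_on with
  | _ N ih =>
    match N with
    | 0 => rw [A_zero]; simp [genFib]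
    | n + 1 =>
      rw [A_succ m n hm]
      rw [show genFib m (n + 1 + 1) = ∑ i ∈ Finset.range m, genFib m (n + 1 - i) from by
        rw [genFib]]
      rw [← Finset.sum_subset (Finset.range_mono (min_le_left m (n + 1)))
        (fun i _ hi => by
          rw [Finset.mem_range] at *
          have h0 : n + 1 - i = 0 := by omega
          rw [h0]; simp [genFib])]
      refine Finset.sum_congr rfl ?_
      intro r hr
      rw [Finset.mem_range] at hr
      rw [ih (n - r) (by omega)]
      congr 1
      omega

end Counting

section Translate

variable {n : ℕ} (π : Equiv.Perm (Fin n))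

/-- an inline 3-element function on `Fin L.length` -/
def tri3 (L : List ℕ) (i j l : Fin n) : Fin L.length → Fin n :=
  fun t => if (t : ℕ) = 0 then i else if (t : ℕ) = 1 then j else l

lemma tri3_mono {L : List ℕ} (hL : L.length = 3) {i j l : Fin n} (h1 : i < j) (h2 : j < l) :
    StrictMono (tri3 L i j l) := by
  intro x y hxy
  rcases x with ⟨xv, hx⟩
  rcases y with ⟨yv, hy⟩
  have hx3 : xv < 3 := by omega
  have hy3 : yv < 3 := by omega
  rw [Fin.lt_def] at hxy
  simp only at hxy
  interval_cases xv <;> interval_cases yv <;>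
    simp_all [tri3] <;> first | exact h1 | exact h2 | exact h1.trans h2

lemma avoids12_iff :
    (AvoidsPat π [1, 2, 3] ∧ AvoidsPat π [1, 3, 2]) ↔ P1 π := by
  constructor
  · rintro ⟨hA, hB⟩ i j l hij hjl h1 h2
    have hniji : ¬ (π j < π i) := fun hc => absurd (hc.trans h1) (lt_irrefl _)
    have hnili : ¬ (π l < π i) := fun hc => absurd (hc.trans h2) (lt_irrefl _)
    rcases lt_trichotomy (π j) (π l) with h | h | h
    · apply hA
      have hnilj : ¬ (π l < π j) := fun hc => absurd (hc.trans h) (lt_irrefl _)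
      refine ⟨OrderEmbedding.ofStrictMono (tri3 [1, 2, 3] i j l) (tri3_mono (by simp) hij hjl), ?_⟩
      intro a b
      show [1, 2, 3].get a < [1, 2, 3].get b ↔ π (tri3 [1, 2, 3] i j l a) < π (tri3 [1, 2, 3] i j l b)
      rcases a with ⟨av, ha⟩
      rcases b with ⟨bv, hb⟩
      have ha3 : av < 3 := by simpa using ha
      have hb3 : bv < 3 := by simpa using hb
      interval_cases av <;> interval_cases bv <;>
        simp only [tri3] <;> norm_num <;>
        first
          | exact h1 | exact h2 | exact h
          | exact h1.le | exact h2.le | exact h.le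
          | exact le_refl _
    · exact absurd (π.injective h) (Fin.ne_of_lt hjl)
    · apply hB
      have hnijl : ¬ (π j < π l) := fun hc => absurd (hc.trans h) (lt_irrefl _)
      refine ⟨OrderEmbedding.ofStrictMono (tri3 [1, 3, 2] i j l) (tri3_mono (by simp) hij hjl), ?_⟩
      intro a b
      show [1, 3, 2].get a < [1, 3, 2].get b ↔ π (tri3 [1, 3, 2] i j l a) < π (tri3 [1, 3, 2] i j l b)
      rcases a with ⟨av, ha⟩
      rcases b with ⟨bv, hb⟩
      have ha3 : av < 3 := by simpa using ha
      have hb3 : bv < 3 := by simpa using hb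
      interval_cases av <;> interval_cases bv <;>
        simp only [tri3] <;> norm_num <;>
        first
          | exact h1 | exact h2 | exact h
          | exact h1.le | exact h2.le | exact h.le
          | exact le_refl _
  · intro hP1
    constructor
    · rintro ⟨f, hf⟩
      have h01 : π (f ⟨0, by decide⟩) < π (f ⟨1, by decide⟩) :=
        (hf ⟨0, by decide⟩ ⟨1, by decide⟩).mp (by decide)
      have h02 : π (f ⟨0, by decide⟩) < π (f ⟨2, by decide⟩) :=
        (hf ⟨0, by decide⟩ ⟨2, by decide⟩).mp (by decide)
      exact hP1 _ _ _ (f.strictMono (show (⟨0, by decide⟩ : Fin _) < ⟨1, by decide⟩ by decide))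
        (f.strictMono (show (⟨1, by decide⟩ : Fin _) < ⟨2, by decide⟩ by decide)) h01 h02
    · rintro ⟨f, hf⟩
      have h01 : π (f ⟨0, by decide⟩) < π (f ⟨1, by decide⟩) :=
        (hf ⟨0, by decide⟩ ⟨1, by decide⟩).mp (by decide)
      have h02 : π (f ⟨0, by decide⟩) < π (f ⟨2, by decide⟩) :=
        (hf ⟨0, by decide⟩ ⟨2, by decide⟩).mp (by decide)
      exact hP1 _ _ _ (f.strictMono (show (⟨0, by decide⟩ : Fin _) < ⟨1, by decide⟩ by decide))
        (f.strictMono (show (⟨1, by decide⟩ : Fin _) < ⟨2, by decide⟩ by decide)) h01 h02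

end Translate

section TranslateS

variable {m : ℕ}

/-- the σ pattern list -/
def sigmaPat (m : ℕ) : List ℕ := ((List.range m).reverse.map (· + 1)) ++ [m + 1]

lemma sigmaPat_len : (sigmaPat m).length = m + 1 := by simp [sigmaPat]

lemma sigmaPat_get (i : Fin (sigmaPat m).length) :
    (sigmaPat m).get i = if (i : ℕ) < m then m - (i : ℕ) else m + 1 := by
  have hi : (i : ℕ) < m + 1 := by
    have h1 := i.isLt
    have h2 := sigmaPat_len (m := m)
    omega
  rw [List.get_eq_getElem]
  by_cases h : (i : ℕ) < m
  · rw [if_pos h]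
    unfold sigmaPat
    rw [List.getElem_append_left (by simpa using h)]
    rw [List.getElem_map, List.getElem_reverse, List.getElem_range]
    simp only [List.length_range]
    omega
  · rw [if_neg h]
    have him : (i : ℕ) = m := by omega
    unfold sigmaPat
    rw [List.getElem_append_right (by simpa using Nat.le_of_eq him.symm)]
    simp [him]

variable {n : ℕ} (π : Equiv.Perm (Fin n))

lemma avoids_s_iff (hm : 1 ≤ m) : AvoidsPat π (sigmaPat m) ↔ P2 m π := by
  unfold AvoidsPat P2
  apply not_congr
  constructor
  · rintro ⟨f, hf⟩
    refine ⟨fun t => f (Fin.cast sigmaPat_len.symm t), ?_, ?_, ?_⟩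
    · intro a b hab
      apply f.strictMono
      rw [Fin.lt_def] at hab ⊢
      exact hab
    · intro i j hij hj
      have hi : (i : ℕ) < m := lt_trans (Fin.lt_def.mp hij) hj
      apply (hf (Fin.cast sigmaPat_len.symm j) (Fin.cast sigmaPat_len.symm i)).mp
      rw [sigmaPat_get, sigmaPat_get]
      simp only [Fin.coe_cast]
      rw [if_pos (by exact hj), if_pos (by exact hi)]
      have := Fin.lt_def.mp hij
      omega
    · intro i hi
      have hlast : ¬ ((Fin.cast sigmaPat_len.symm (Fin.last m) : Fin (sigmaPat m).length) : ℕ) < m := by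
        simp
      apply (hf (Fin.cast sigmaPat_len.symm i) (Fin.cast sigmaPat_len.symm (Fin.last m))).mp
      rw [sigmaPat_get, sigmaPat_get]
      simp only [Fin.coe_cast]
      rw [if_pos (by exact hi), if_neg (by simpa using hlast)]
      omega
  · rintro ⟨g, mono, c2, c3⟩
    have hmono : StrictMono (fun t : Fin (sigmaPat m).length => g (Fin.cast sigmaPat_len t)) := by
      intro a b hab
      apply mono
      rw [Fin.lt_def] at hab ⊢
      exact hab
    refine ⟨OrderEmbedding.ofStrictMono _ hmono, ?_⟩
    intro a b
    have hco : ∀ t : Fin (sigmaPat m).length,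
        (OrderEmbedding.ofStrictMono _ hmono) t = g (Fin.cast sigmaPat_len t) := fun _ => rfl
    rw [hco, hco, sigmaPat_get, sigmaPat_get]
    have ha : (a : ℕ) < m + 1 := by
      have := a.isLt; have := sigmaPat_len (m := m); omega
    have hb : (b : ℕ) < m + 1 := by
      have := b.isLt; have := sigmaPat_len (m := m); omega
    set a' := Fin.cast sigmaPat_len a with ha'
    set b' := Fin.cast sigmaPat_len b with hb'
    have hav : (a' : ℕ) = (a : ℕ) := rfl
    have hbv : (b' : ℕ) = (b : ℕ) := rfl
    by_cases hA : (a : ℕ) < m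
    · rw [if_pos hA]
      by_cases hB : (b : ℕ) < m
      · rw [if_pos hB]
        rcases lt_trichotomy (a : ℕ) (b : ℕ) with hab | hab | hab
        · have := c2 a' b' (Fin.lt_def.mpr (by omega)) (by omega)
          exact iff_of_false (by omega) (fun hc => absurd (hc.trans this) (lt_irrefl _))
        · have : a' = b' := Fin.ext (by omega)
          rw [this]
          exact iff_of_false (by omega) (lt_irrefl _)
        · have := c2 b' a' (Fin.lt_def.mpr (by omega)) (by omega)
          exact iff_of_true (by omega) this
      · rw [if_neg hB]
        have hbm : b' = Fin.last m := Fin.ext (by simp only [Fin.val_last]; omega)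
        rw [hbm]
        exact iff_of_true (by omega) (c3 a' (by omega))
    · rw [if_neg hA]
      have ham : a' = Fin.last m := Fin.ext (by simp only [Fin.val_last]; omega)
      rw [ham]
      by_cases hB : (b : ℕ) < m
      · rw [if_pos hB]
        have := c3 b' (by omega)
        exact iff_of_false (by omega) (fun hc => absurd (hc.trans this) (lt_irrefl _))
      · rw [if_neg hB]
        have hbm : b' = Fin.last m := Fin.ext (by simp only [Fin.val_last]; omega)
        rw [hbm]
        exact iff_of_false (by omega) (lt_irrefl _)

end TranslateS

theorem avoid_123_132_desc_k_eq_genFib (k n : ℕ) (hk : 2 ≤ k) :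
    AvoidCount [[1, 2, 3], [1, 3, 2], ((List.range (k - 1)).reverse.map (· + 1)) ++ [k]] n
      = genFib (k - 1) (n + 1) := by
  obtain ⟨m, rfl⟩ : ∃ m, k = m + 1 := ⟨k - 1, by omega⟩
  have hm : 1 ≤ m := by omega
  show AvoidCount [[1, 2, 3], [1, 3, 2], sigmaPat m] n = genFib m (n + 1)
  have hiff : ∀ π : Equiv.Perm (Fin n),
      (∀ s ∈ [[1, 2, 3], [1, 3, 2], sigmaPat m], AvoidsPat π s) ↔ Good m π := by
    intro π
    constructor
    · intro h
      have h1 := h [1, 2, 3] (by simp)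
      have h2 := h [1, 3, 2] (by simp)
      have h3 := h (sigmaPat m) (by simp)
      exact ⟨(avoids12_iff π).mp ⟨h1, h2⟩, (avoids_s_iff π hm).mp h3⟩
    · intro h s hs
      simp only [List.mem_cons, List.not_mem_nil, or_false] at hs
      rcases hs with rfl | rfl | rfl
      · exact ((avoids12_iff π).mpr h.1).1
      · exact ((avoids12_iff π).mpr h.1).2
      · exact (avoids_s_iff π hm).mpr h.2
  unfold AvoidCount
  rw [Nat.card_congr (Equiv.subtypeEquivRight hiff)]
  exact A_eq_genFib m hm n
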